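/- Let λ > 0, μ > 0 and ε ∈ [0,1), and let G : ℝ × ℝ → ℝ × ℝ be the crowding vector field G(z,m) = ((μ/2)·z·|z| + (μ·ε·m/2)·z² + λ·z + 2·m, −(1+ε)·μ·m·|z| − μ·(1 + ε·m²)·z). A point (z,m) with m ∈ [−1,1] satisfies G(z,m) = (0,0) if and only if (z,m) = (0,0), or (z,m) = (z₁, −1), or (z,m) = (−z₁, 1), where z₁ = (√(λ² + 4μ(1−ε)) − λ)/(μ(1−ε)) > 0. In particular, the only fixed point with |m| < 1 is the origin. -/
import Mathlib


set_option maxHeartbeats 1000000 in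
/-- Fixed points of the crowding vector field
`G(z,m) = ((μ/2)z|z| + (μεm/2)z² + λz + 2m, −(1+ε)μm|z| − μ(1+εm²)z)` in the strip
`m ∈ [−1,1]`: they are exactly the origin and `(±z₁, ∓1)` with
`z₁ = (√(λ² + 4μ(1−ε)) − λ)/(μ(1−ε)) > 0`.  In particular the only fixed point with
`|m| < 1` is the origin. -/
theorem crowding_fixed_points (lam mu eps : ℝ) (hlam : 0 < lam) (hmu : 0 < mu)
    (heps : eps ∈ Set.Ico (0 : ℝ) 1)
    (z m : ℝ) (hm : m ∈ Set.Icc (-1 : ℝ) 1) :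
    let z₁ : ℝ := (Real.sqrt (lam ^ 2 + 4 * mu * (1 - eps)) - lam) / (mu * (1 - eps))
    0 < z₁ ∧
    (((mu / 2) * z * |z| + (mu * eps * m / 2) * z ^ 2 + lam * z + 2 * m = 0 ∧
      -((1 + eps) * mu * m * |z|) - mu * (1 + eps * m ^ 2) * z = 0) ↔
      ((z = 0 ∧ m = 0) ∨ (z = z₁ ∧ m = -1) ∨ (z = -z₁ ∧ m = 1))) ∧
    (|m| < 1 →
      (((mu / 2) * z * |z| + (mu * eps * m / 2) * z ^ 2 + lam * z + 2 * m = 0 ∧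
        -((1 + eps) * mu * m * |z|) - mu * (1 + eps * m ^ 2) * z = 0) →
        (z = 0 ∧ m = 0))) := by
  obtain ⟨heps0, heps1⟩ := heps
  obtain ⟨hm1, hm2⟩ := hm
  intro z₁
  have hz₁def : z₁ = (Real.sqrt (lam ^ 2 + 4 * mu * (1 - eps)) - lam) / (mu * (1 - eps)) := rfl
  set s := Real.sqrt (lam ^ 2 + 4 * mu * (1 - eps)) with hs
  have hkpos : 0 < mu * (1 - eps) := mul_pos hmu (by linarith)
  have hs2 : s ^ 2 = lam ^ 2 + 4 * mu * (1 - eps) := by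
    rw [hs, Real.sq_sqrt]; nlinarith [sq_nonneg lam]
  have hs0 : 0 ≤ s := Real.sqrt_nonneg _
  have hslam : lam < s := by nlinarith
  have hz₁pos : 0 < z₁ := by
    rw [hz₁def]; exact div_pos (by linarith) hkpos
  have hq : mu * (1 - eps) / 2 * z₁ ^ 2 + lam * z₁ = 2 := by
    rw [hz₁def]
    field_simp
    nlinarith [hs2]
  have hkne : mu * (1 - eps) ≠ 0 := ne_of_gt hkpos
  have huniq : ∀ w : ℝ, 0 < w → mu * (1 - eps) / 2 * w ^ 2 + lam * w = 2 → w = z₁ := by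
    intro w hw hwq
    have h : (w - z₁) * (mu * (1 - eps) / 2 * (w + z₁) + lam) = 0 := by
      linear_combination hwq - hq
    rcases mul_eq_zero.mp h with h' | h'
    · linarith
    · nlinarith
  refine ⟨hz₁pos, ?_, ?_⟩
  · constructor
    · rintro ⟨h1, h2⟩
      rcases lt_trichotomy z 0 with hz | hz | hz
      · -- z < 0
        rw [abs_of_neg hz] at h1 h2
        have hfac : mu * z * ((m - 1) * (eps * m - 1)) = 0 := by linear_combination -h2
        have hmz : mu * z ≠ 0 := by
          exact mul_ne_zero (ne_of_gt hmu) (ne_of_lt hz)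
        have hfac2 : (m - 1) * (eps * m - 1) = 0 := by
          rcases mul_eq_zero.mp hfac with h' | h'
          · exact absurd h' hmz
          · exact h'
        have hem : eps * m - 1 < 0 := by nlinarith
        have hm' : m = 1 := by
          rcases mul_eq_zero.mp hfac2 with h' | h'
          · linarith
          · linarith
        subst hm'
        have hwq : mu * (1 - eps) / 2 * (-z) ^ 2 + lam * (-z) = 2 := by
          linear_combination -h1
        have := huniq (-z) (by linarith) hwq
        exact Or.inr (Or.inr ⟨by linarith, rfl⟩)
      · -- z = 0
        subst hz
        simp only [abs_zero, mul_zero, zero_mul, mul_zero] at h1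
        have : m = 0 := by nlinarith [h1]
        exact Or.inl ⟨rfl, this⟩
      · -- z > 0
        rw [abs_of_pos hz] at h1 h2
        have hfac : mu * z * ((m + 1) * (eps * m + 1)) = 0 := by linear_combination -h2
        have hmz : mu * z ≠ 0 := mul_ne_zero (ne_of_gt hmu) (ne_of_gt hz)
        have hfac2 : (m + 1) * (eps * m + 1) = 0 := by
          rcases mul_eq_zero.mp hfac with h' | h'
          · exact absurd h' hmz
          · exact h'
        have hem : 0 < eps * m + 1 := by nlinarith
        have hm' : m = -1 := by
          rcases mul_eq_zero.mp hfac2 with h' | h'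
          · linarith
          · linarith
        subst hm'
        have hwq : mu * (1 - eps) / 2 * z ^ 2 + lam * z = 2 := by
          linear_combination h1
        have := huniq z hz hwq
        exact Or.inr (Or.inl ⟨this, rfl⟩)
    · rintro (⟨rfl, rfl⟩ | ⟨rfl, rfl⟩ | ⟨rfl, rfl⟩)
      · norm_num
      · rw [abs_of_pos hz₁pos]
        constructor
        · linear_combination hq
        · ring
      · rw [abs_of_neg (neg_neg_iff_pos.mpr hz₁pos)]
        constructor
        · linear_combination -hq
        · ring
  · intro habs hG
    -- reuse: derive via cases
    rcases lt_trichotomy z 0 with hz | hz | hz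
    · exfalso
      obtain ⟨h1, h2⟩ := hG
      rw [abs_of_neg hz] at h1 h2
      have hfac : mu * z * ((m - 1) * (eps * m - 1)) = 0 := by linear_combination -h2
      have hmz : mu * z ≠ 0 := mul_ne_zero (ne_of_gt hmu) (ne_of_lt hz)
      have hfac2 : (m - 1) * (eps * m - 1) = 0 := by
        rcases mul_eq_zero.mp hfac with h' | h'
        · exact absurd h' hmz
        · exact h'
      have hem : eps * m - 1 < 0 := by nlinarith
      have habs' := abs_lt.mp habs
      rcases mul_eq_zero.mp hfac2 with h' | h' <;> linarith [habs'.1, habs'.2]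
    · subst hz
      obtain ⟨h1, h2⟩ := hG
      simp only [abs_zero, mul_zero, zero_mul, mul_zero] at h1
      exact ⟨rfl, by nlinarith [h1]⟩
    · exfalso
      obtain ⟨h1, h2⟩ := hG
      rw [abs_of_pos hz] at h1 h2
      have hfac : mu * z * ((m + 1) * (eps * m + 1)) = 0 := by linear_combination -h2
      have hmz : mu * z ≠ 0 := mul_ne_zero (ne_of_gt hmu) (ne_of_gt hz)
      have hfac2 : (m + 1) * (eps * m + 1) = 0 := by
        rcases mul_eq_zero.mp hfac with h' | h'
        · exact absurd h' hmz
        · exact h'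
      have hem : 0 < eps * m + 1 := by nlinarith
      have habs' := abs_lt.mp habs
      rcases mul_eq_zero.mp hfac2 with h' | h' <;> linarith [habs'.1, habs'.2]
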